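/- Under the assumptions of the static crowdsensing setting (Φ as above, m ≥ 2, Φ(S_k*) > 0), the greedy algorithm selecting k users one at a time to maximize marginal gain of Φ achieves Φ(S_k) ≥ (1 − ((m−2)/m)·((k−1)/k)^k) · Φ(S_k*), where S_k* is an optimal size-k set. -/

import Mathlib

open Finset

/-- The set of edges of `G` incident to at least one vertex of `S`. -/
def incidentEdges {V : Type*} [Fintype V] [DecidableEq V] (G : SimpleGraph V)
    [DecidableRel G.Adj] (S : Finset V) : Finset (Sym2 V) :=
  G.edgeFinset.filter (fun e => ∃ v ∈ S, v ∈ e)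

/-- The average PoI welfare `Φ(S) = (1/m) Σ_v |E₁({v} ∪ N₂(v) ∪ S)|`. -/
noncomputable def welfare {V : Type*} [Fintype V] [DecidableEq V]
    (G1 G2 : SimpleGraph V) [DecidableRel G1.Adj] [DecidableRel G2.Adj]
    (S : Finset V) : ℝ :=
  (1 / (Fintype.card V : ℝ)) *
    ∑ v : V, ((incidentEdges G1 (insert v (G2.neighborFinset v ∪ S))).card : ℝ)

section Aux
variable {V : Type*} [Fintype V] [DecidableEq V] (G1 G2 : SimpleGraph V)
  [DecidableRel G1.Adj] [DecidableRel G2.Adj]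

lemma incident_mono {A B : Finset V} (h : A ⊆ B) :
    incidentEdges G1 A ⊆ incidentEdges G1 B := by
  intro e he
  simp only [incidentEdges, mem_filter] at he ⊢
  obtain ⟨he1, v, hv, hve⟩ := he
  exact ⟨he1, v, h hv, hve⟩

lemma incident_insert (s : V) (A : Finset V) :
    incidentEdges G1 (insert s A) = incidentEdges G1 {s} ∪ incidentEdges G1 A := by
  ext e
  simp only [incidentEdges, mem_filter, mem_union, mem_insert, mem_singleton]
  constructor
  · rintro ⟨he, v, (rfl | hv), hve⟩
    · exact Or.inl ⟨he, v, rfl, hve⟩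
    · exact Or.inr ⟨he, v, hv, hve⟩
  · rintro (⟨he, v, rfl, hve⟩ | ⟨he, v, hv, hve⟩)
    · exact ⟨he, v, Or.inl rfl, hve⟩
    · exact ⟨he, v, Or.inr hv, hve⟩

lemma incident_singleton (v : V) :
    incidentEdges G1 {v} = G1.incidenceFinset v := by
  ext e
  simp only [incidentEdges, mem_filter, mem_singleton, SimpleGraph.mem_incidenceFinset,
    SimpleGraph.incidenceSet, Set.mem_setOf_eq, SimpleGraph.mem_edgeFinset]
  constructor
  · rintro ⟨h, v', rfl, hv⟩; exact ⟨h, hv⟩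
  · rintro ⟨h, hv⟩; exact ⟨h, v, rfl, hv⟩

/-- The unnormalized welfare `m · Φ(A)`. -/
noncomputable def gfun (A : Finset V) : ℝ :=
  ∑ v : V, ((incidentEdges G1 (insert v (G2.neighborFinset v ∪ A))).card : ℝ)

lemma welfare_eq (A : Finset V) :
    welfare G1 G2 A = (1 / (Fintype.card V : ℝ)) * gfun G1 G2 A := rfl

lemma g_mono {A B : Finset V} (h : A ⊆ B) : gfun G1 G2 A ≤ gfun G1 G2 B := by
  apply Finset.sum_le_sum
  intro v _
  exact_mod_cast Finset.card_le_card (incident_mono G1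
    (Finset.insert_subset_insert _ (Finset.union_subset_union_right h)))

lemma g_insert (s : V) (A : Finset V) :
    gfun G1 G2 (insert s A) = gfun G1 G2 A +
      ∑ v : V, ((incidentEdges G1 {s} \
        incidentEdges G1 (insert v (G2.neighborFinset v ∪ A))).card : ℝ) := by
  rw [gfun, gfun, ← Finset.sum_add_distrib]
  apply Finset.sum_congr rfl
  intro v _
  have hset : insert v (G2.neighborFinset v ∪ insert s A)
      = insert s (insert v (G2.neighborFinset v ∪ A)) := by
    ext x; simp only [mem_insert, mem_union]; tauto
  rw [hset, incident_insert]
  have h2 := Finset.card_sdiff_add_card (incidentEdges G1 {s})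
    (incidentEdges G1 (insert v (G2.neighborFinset v ∪ A)))
  rw [← h2]
  push_cast
  ring

lemma g_submod {A B : Finset V} (h : A ⊆ B) (s : V) :
    gfun G1 G2 (insert s B) - gfun G1 G2 B ≤ gfun G1 G2 (insert s A) - gfun G1 G2 A := by
  rw [g_insert, g_insert]
  simp only [add_sub_cancel_left]
  apply Finset.sum_le_sum
  intro v _
  have hsub : incidentEdges G1 (insert v (G2.neighborFinset v ∪ A)) ⊆
      incidentEdges G1 (insert v (G2.neighborFinset v ∪ B)) :=
    incident_mono G1 (Finset.insert_subset_insert _ (Finset.union_subset_union_right h))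
  exact_mod_cast Finset.card_le_card (Finset.sdiff_subset_sdiff (le_refl _) hsub)

lemma g_telescope (A T : Finset V) :
    gfun G1 G2 (A ∪ T) ≤ gfun G1 G2 A +
      ∑ s ∈ T, (gfun G1 G2 (insert s A) - gfun G1 G2 A) := by
  classical
  induction T using Finset.induction_on with
  | empty => simp
  | @insert t T' ht ih =>
    rw [Finset.sum_insert ht, Finset.union_insert]
    have h1 := g_submod G1 G2 (Finset.subset_union_left (s₁ := A) (s₂ := T')) t
    linarith

end Aux

/-- Greedy user selection guarantees a `1 - ((m-2)/m)((k-1)/k)^k` fraction of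
the optimal welfare in the static crowdsensing setting. -/
theorem stmt_10 {V : Type*} [Fintype V] [DecidableEq V]
    (G1 G2 : SimpleGraph V) [DecidableRel G1.Adj] [DecidableRel G2.Adj]
    (hm : 2 ≤ Fintype.card V)
    (k : ℕ) (hk : 1 ≤ k) (S : ℕ → Finset V) (hS0 : S 0 = ∅)
    (hgreedy : ∀ i < k, ∃ s : V, S (i + 1) = insert s (S i) ∧
      ∀ t : V, welfare G1 G2 (insert t (S i)) - welfare G1 G2 (S i) ≤
        welfare G1 G2 (insert s (S i)) - welfare G1 G2 (S i))
    (Sstar : Finset V) (hstar_card : Sstar.card = k)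
    (hstar_opt : ∀ T : Finset V, T.card = k → welfare G1 G2 T ≤ welfare G1 G2 Sstar)
    (hpos : 0 < welfare G1 G2 Sstar) :
    welfare G1 G2 (S k) ≥
      (1 - (((Fintype.card V : ℝ) - 2) / (Fintype.card V : ℝ))
            * (((k : ℝ) - 1) / k) ^ k) * welfare G1 G2 Sstar := by
  classical
  set m : ℝ := (Fintype.card V : ℝ) with hmdef
  have hm0 : (0:ℝ) < m := by
    have h : (0:ℕ) < Fintype.card V := by omega
    rw [hmdef]
    exact_mod_cast h
  have hk0 : (0:ℝ) < (k:ℝ) := by exact_mod_cast hk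
  set g : Finset V → ℝ := gfun G1 G2 with hgdef
  -- greedy step in terms of g
  have step : ∀ i < k, g Sstar - g (S i) ≤ (k:ℝ) * (g (S (i+1)) - g (S i)) := by
    intro i hi
    obtain ⟨s, hs1, hs2⟩ := hgreedy i hi
    have hmarg : ∀ t : V, g (insert t (S i)) - g (S i) ≤ g (insert s (S i)) - g (S i) := by
      intro t
      have := hs2 t
      rw [welfare_eq, welfare_eq, welfare_eq] at this
      exact (mul_le_mul_iff_right₀ (show (0:ℝ) < 1/m by positivity)).mp
        (by rw [mul_sub, mul_sub]; exact this)
    have h1 : g Sstar ≤ g (S i ∪ Sstar) :=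
      g_mono G1 G2 Finset.subset_union_right
    have h2 := g_telescope G1 G2 (S i) Sstar
    have h3 : ∑ t ∈ Sstar, (g (insert t (S i)) - g (S i)) ≤
        (Sstar.card : ℝ) * (g (insert s (S i)) - g (S i)) := by
      rw [← nsmul_eq_mul, ← Finset.sum_const]
      exact Finset.sum_le_sum (fun t _ => hmarg t)
    rw [hstar_card] at h3
    rw [hs1]
    linarith
  -- recurrence
  set r : ℝ := (((k:ℝ) - 1) / k) with hrdef
  have hr0 : 0 ≤ r := by
    apply div_nonneg _ (le_of_lt hk0)
    have : (1:ℝ) ≤ (k:ℝ) := by exact_mod_cast hk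
    linarith
  have hrec : ∀ i ≤ k, g Sstar - g (S i) ≤ r ^ i * (g Sstar - g (S 0)) := by
    intro i
    induction i with
    | zero => intro _; simp
    | succ n ih =>
      intro hn
      have hnk : n < k := by omega
      have h1 := step n hnk
      have h2 := ih (by omega)
      have h3 : g Sstar - g (S (n+1)) ≤ r * (g Sstar - g (S n)) := by
        rw [hrdef]
        rw [div_mul_eq_mul_div, le_div_iff₀ hk0]
        nlinarith [h1]
      calc g Sstar - g (S (n+1)) ≤ r * (g Sstar - g (S n)) := h3
        _ ≤ r * (r ^ n * (g Sstar - g (S 0))) := by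
            exact mul_le_mul_of_nonneg_left h2 hr0
        _ = r ^ (n+1) * (g Sstar - g (S 0)) := by ring
  have hfinal := hrec k le_rfl
  -- bounds: g ∅ ≥ 2|E1| and g Sstar ≤ m |E1|
  set E1 : ℝ := (G1.edgeFinset.card : ℝ) with hE1def
  have hlow : 2 * E1 ≤ g (S 0) := by
    rw [hS0, hgdef, gfun]
    have h1 : ∀ v : V, (G1.degree v : ℝ) ≤
        ((incidentEdges G1 (insert v (G2.neighborFinset v ∪ (∅ : Finset V)))).card : ℝ) := by
      intro v
      have hsub : G1.incidenceFinset v ⊆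
          incidentEdges G1 (insert v (G2.neighborFinset v ∪ (∅ : Finset V))) := by
        rw [← incident_singleton]
        exact incident_mono G1 (by simp)
      have := Finset.card_le_card hsub
      rw [G1.card_incidenceFinset_eq_degree] at this
      exact_mod_cast this
    calc (2:ℝ) * E1 = ((∑ v : V, G1.degree v : ℕ) : ℝ) := by
          rw [G1.sum_degrees_eq_twice_card_edges]; push_cast; ring
      _ = ∑ v : V, (G1.degree v : ℝ) := by push_cast; rfl
      _ ≤ _ := Finset.sum_le_sum (fun v _ => h1 v)
  have hhigh : g Sstar ≤ m * E1 := by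
    rw [hgdef, gfun]
    have h1 : ∀ v : V, ((incidentEdges G1 (insert v (G2.neighborFinset v ∪ Sstar))).card : ℝ)
        ≤ E1 := by
      intro v
      have hsub : incidentEdges G1 (insert v (G2.neighborFinset v ∪ Sstar)) ⊆
          G1.edgeFinset := Finset.filter_subset _ _
      rw [hE1def]
      exact_mod_cast Finset.card_le_card hsub
    calc ∑ v : V, ((incidentEdges G1 (insert v (G2.neighborFinset v ∪ Sstar))).card : ℝ)
        ≤ ∑ _v : V, E1 := Finset.sum_le_sum (fun v _ => h1 v)
      _ = m * E1 := by rw [Finset.sum_const]; simp [hmdef, nsmul_eq_mul]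
  -- combine
  have hgap : g Sstar - g (S 0) ≤ ((m - 2) / m) * g Sstar := by
    rw [div_mul_eq_mul_div, le_div_iff₀ hm0]
    nlinarith
  have hrk : (0:ℝ) ≤ r ^ k := pow_nonneg hr0 k
  have hgS : g (S k) ≥ (1 - ((m - 2) / m) * r ^ k) * g Sstar := by
    nlinarith [mul_le_mul_of_nonneg_left hgap hrk]
  rw [welfare_eq, welfare_eq]
  rw [ge_iff_le, ← mul_assoc, mul_comm _ (1/m), mul_assoc]
  apply mul_le_mul_of_nonneg_left _ (by positivity)
  exact hgS
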